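/- Let E be a locally free sheaf on an irreducible smooth scheme X with generic point ξ, and let W ⊆ E_ξ be an O_ξ-submodule. Then there exists a unique coherent subsheaf F ⊆ E such that F_ξ = W and the cokernel Q of F ↪ E is torsion-free; moreover F is reflexive. -/
import Mathlib

open TensorProduct

set_option linter.unusedSectionVars false
set_option maxHeartbeats 1000000

section LangtonHelpers

variable {R K : Type*} [CommRing R] [IsDomain R] [Field K] [Algebra R K] [IsFractionRing R K]
variable {E : Type*} [AddCommGroup E] [Module R E]

lemma aux_mk_one_injective [Module.Flat R E] :
    Function.Injective (TensorProduct.mk R K E 1) := by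
  have h : (TensorProduct.mk R K E 1 : E →ₗ[R] K ⊗[R] E) =
      (LinearMap.rTensor E (Algebra.linearMap R K)).comp
        (TensorProduct.lid R E).symm.toLinearMap := by
    ext e; simp
  rw [h, LinearMap.coe_comp]
  exact Function.Injective.comp
    (Module.Flat.rTensor_preserves_injective_linearMap (R := R) (M := E)
      (Algebra.linearMap R K) (IsFractionRing.injective R K))
    (TensorProduct.lid R E).symm.injective

lemma aux_exists_denom (w : K ⊗[R] E) :
    ∃ r : R, r ≠ 0 ∧ ∃ e : E, r • w = (1 : K) ⊗ₜ[R] e := by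
  induction w using TensorProduct.induction_on with
  | zero => exact ⟨1, one_ne_zero, 0, by simp⟩
  | tmul c e =>
      obtain ⟨⟨a, b⟩, hb⟩ := IsLocalization.surj (nonZeroDivisors R) c
      refine ⟨b, nonZeroDivisors.ne_zero b.2, a • e, ?_⟩
      have : (b : R) • (c ⊗ₜ[R] e) = ((c * algebraMap R K b) ⊗ₜ[R] e) := by
        rw [smul_tmul', Algebra.smul_def, mul_comm]
      rw [this, hb, ← TensorProduct.smul_tmul, Algebra.smul_def, mul_one]
  | add x y hx hy =>
      obtain ⟨r₁, hr₁, e₁, he₁⟩ := hx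
      obtain ⟨r₂, hr₂, e₂, he₂⟩ := hy
      refine ⟨r₁ * r₂, mul_ne_zero hr₁ hr₂, r₂ • e₁ + r₁ • e₂, ?_⟩
      have h1 : (r₁ * r₂) • x = (1 : K) ⊗ₜ[R] (r₂ • e₁) := by
        rw [mul_comm, mul_smul, he₁, tmul_smul]
      have h2 : (r₁ * r₂) • y = (1 : K) ⊗ₜ[R] (r₁ • e₂) := by
        rw [mul_smul, he₂, tmul_smul]
      rw [smul_add, h1, h2, tmul_add]

lemma aux_span_denom (F : Submodule R E) (w : K ⊗[R] E)
    (hw : w ∈ Submodule.span K (⇑(TensorProduct.mk R K E 1) '' (F : Set E))) :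
    ∃ r : R, r ≠ 0 ∧ ∃ x ∈ F, r • w = (1 : K) ⊗ₜ[R] x := by
  induction hw using Submodule.span_induction with
  | mem w hw =>
      obtain ⟨x, hx, rfl⟩ := hw
      exact ⟨1, one_ne_zero, x, hx, by simp⟩
  | zero => exact ⟨1, one_ne_zero, 0, zero_mem _, by simp⟩
  | add x y _ _ hx hy =>
      obtain ⟨r₁, hr₁, e₁, he₁, heq₁⟩ := hx
      obtain ⟨r₂, hr₂, e₂, he₂, heq₂⟩ := hy
      refine ⟨r₁ * r₂, mul_ne_zero hr₁ hr₂, r₂ • e₁ + r₁ • e₂,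
        F.add_mem (F.smul_mem _ he₁) (F.smul_mem _ he₂), ?_⟩
      have h1 : (r₁ * r₂) • x = (1 : K) ⊗ₜ[R] (r₂ • e₁) := by
        rw [mul_comm, mul_smul, heq₁, tmul_smul]
      have h2 : (r₁ * r₂) • y = (1 : K) ⊗ₜ[R] (r₁ • e₂) := by
        rw [mul_smul, heq₂, tmul_smul]
      rw [smul_add, h1, h2, tmul_add]
  | smul c w _ hw =>
      obtain ⟨r, hr, x, hx, heq⟩ := hw
      obtain ⟨⟨a, b⟩, hb⟩ := IsLocalization.surj (nonZeroDivisors R) c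
      refine ⟨b * r, mul_ne_zero (nonZeroDivisors.ne_zero b.2) hr, a • x,
        F.smul_mem _ hx, ?_⟩
      have : ((b : R) * r) • (c • w) = ((c * algebraMap R K b)) • (r • w) := by
        rw [mul_smul, smul_comm r c w, ← algebraMap_smul K (b : R) (c • r • w),
          smul_smul, mul_comm]
      rw [this, hb, heq, tmul_smul, algebraMap_smul]

lemma aux_sat {F : Submodule R E} (hnz : NoZeroSMulDivisors R (E ⧸ F)) {r : R} (hr : r ≠ 0)
    {e : E} (h : r • e ∈ F) : e ∈ F := by
  have h1 : r • (Submodule.Quotient.mk e : E ⧸ F) = 0 := by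
    rw [← Submodule.Quotient.mk_smul, Submodule.Quotient.mk_eq_zero]; exact h
  have h2 := (smul_eq_zero.mp h1).resolve_left hr
  rwa [Submodule.Quotient.mk_eq_zero] at h2

lemma aux_separate (V : Submodule K (K ⊗[R] E)) (w : K ⊗[R] E) (hw : w ∉ V) :
    ∃ Ψ : (K ⊗[R] E) →ₗ[K] K, (∀ v ∈ V, Ψ v = 0) ∧ Ψ w ≠ 0 := by
  have hqw : V.mkQ w ≠ 0 := by
    rw [Submodule.mkQ_apply, Ne, Submodule.Quotient.mk_eq_zero]
    exact hw
  have h2 : ¬ ∀ φ : Module.Dual K ((K ⊗[R] E) ⧸ V), φ (V.mkQ w) = 0 := by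
    rw [Module.forall_dual_apply_eq_zero_iff]
    exact hqw
  push_neg at h2
  obtain ⟨φ, hφ⟩ := h2
  refine ⟨φ.comp V.mkQ, fun v hv => ?_, hφ⟩
  rw [LinearMap.comp_apply, Submodule.mkQ_apply,
    (Submodule.Quotient.mk_eq_zero V).mpr hv, map_zero]

variable [Module.Free R E] [Module.Finite R E]

lemma aux_integral_rep (Ψ : (K ⊗[R] E) →ₗ[K] K) :
    ∃ r : R, r ≠ 0 ∧ ∃ ψ : E →ₗ[R] R,
      ∀ e : E, algebraMap R K (ψ e) = r • Ψ ((1 : K) ⊗ₜ[R] e) := by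
  let b := Module.Free.chooseBasis R E
  obtain ⟨r, hr⟩ := IsLocalization.exist_integer_multiples_of_finite
    (nonZeroDivisors R) (fun i => Ψ ((1 : K) ⊗ₜ[R] b i))
  choose c hc using hr
  refine ⟨r, nonZeroDivisors.ne_zero r.2, b.constr ℕ c, ?_⟩
  have key : (Algebra.linearMap R K).comp ((b.constr ℕ c : E →ₗ[R] R)) =
      (r : R) • ((Ψ.restrictScalars R).comp (TensorProduct.mk R K E 1)) := by
    apply b.ext
    intro i
    simp only [LinearMap.comp_apply, Algebra.linearMap_apply, Module.Basis.constr_basis,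
      LinearMap.smul_apply, LinearMap.restrictScalars_apply, TensorProduct.mk_apply]
    exact hc i
  intro e
  have := LinearMap.congr_fun key e
  simpa using this

include K in
lemma aux_dual_extend (F : Submodule R E) (φ : F →ₗ[R] R) :
    ∃ r : R, r ≠ 0 ∧ ∃ ψ : E →ₗ[R] R, ∀ x : F, ψ x = r * φ x := by
  haveI : Module.Flat R K := IsLocalization.flat K (nonZeroDivisors R)
  have hjinj : Function.Injective (LinearMap.baseChange K F.subtype) := by
    intro x y hxy
    have : F.subtype.lTensor K x = F.subtype.lTensor K y := by
      rw [← LinearMap.baseChange_eq_ltensor]; exact hxy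
    exact Module.Flat.lTensor_preserves_injective_linearMap (M := K) F.subtype
      F.injective_subtype this
  obtain ⟨g, hg⟩ := (LinearMap.baseChange K F.subtype).exists_leftInverse_of_injective
    (LinearMap.ker_eq_bot.mpr hjinj)
  obtain ⟨r, hr, ψ, hψ⟩ := aux_integral_rep (R := R) (K := K) (E := E)
    ((LinearMap.liftBaseChange K ((Algebra.linearMap R K).comp φ)).comp g)
  refine ⟨r, hr, ψ, fun x => ?_⟩
  have h1 : ((LinearMap.liftBaseChange K ((Algebra.linearMap R K).comp φ)).comp g)
      ((1 : K) ⊗ₜ[R] (x : E)) = algebraMap R K (φ x) := by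
    have h2 : ((1 : K) ⊗ₜ[R] (x : E)) =
        (LinearMap.baseChange K F.subtype) ((1 : K) ⊗ₜ[R] x) := by
      simp [LinearMap.baseChange_tmul]
    rw [h2, LinearMap.comp_apply]
    have h3 := LinearMap.congr_fun hg ((1 : K) ⊗ₜ[R] x)
    rw [LinearMap.comp_apply] at h3
    rw [h3]
    simp
  have := hψ (x : E)
  rw [h1] at this
  apply IsFractionRing.injective R K
  rw [this, map_mul, Algebra.smul_def]

end LangtonHelpers

theorem stmt0 (R K : Type*) [CommRing R] [IsDomain R] [IsNoetherianRing R]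
    [IsIntegrallyClosed R] [Field K] [Algebra R K] [IsFractionRing R K]
    (E : Type*) [AddCommGroup E] [Module R E] [Module.Free R E] [Module.Finite R E]
    (W : Submodule K (K ⊗[R] E)) :
    (∃! F : Submodule R E,
        Submodule.span K (⇑(TensorProduct.mk R K E 1) '' (F : Set E)) = W ∧
        NoZeroSMulDivisors R (E ⧸ F)) ∧
    (∀ F : Submodule R E,
        Submodule.span K (⇑(TensorProduct.mk R K E 1) '' (F : Set E)) = W →
        NoZeroSMulDivisors R (E ⧸ F) → Module.IsReflexive R F) := by
  classical
  have hKinj := IsFractionRing.injective R K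
  have halg : ∀ r : R, r ≠ 0 → algebraMap R K r ≠ 0 := fun r hr =>
    fun h => hr (hKinj (by rw [h, map_zero]))
  -- the canonical candidate:
  let F₀ : Submodule R E :=
    Submodule.comap (TensorProduct.mk R K E 1) (W.restrictScalars R)
  have hmem : ∀ e : E, e ∈ F₀ ↔ (1 : K) ⊗ₜ[R] e ∈ W := fun e => Iff.rfl
  -- F₀ spans W
  have hspan0 : Submodule.span K (⇑(TensorProduct.mk R K E 1) '' (F₀ : Set E)) = W := by
    apply le_antisymm
    · rw [Submodule.span_le]
      rintro w ⟨x, hx, rfl⟩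
      exact hx
    · intro w hw
      obtain ⟨r, hr, e, he⟩ := aux_exists_denom (R := R) (K := K) w
      have h1 : (1 : K) ⊗ₜ[R] e ∈ W := by
        rw [← he, ← algebraMap_smul K r w]
        exact W.smul_mem _ hw
      have h3 : (1 : K) ⊗ₜ[R] e ∈
          Submodule.span K (⇑(TensorProduct.mk R K E 1) '' (F₀ : Set E)) :=
        Submodule.subset_span ⟨e, (hmem e).mpr h1, rfl⟩
      have hw' : w = (algebraMap R K r)⁻¹ • ((1 : K) ⊗ₜ[R] e) := by
        rw [← he, ← algebraMap_smul K r w, inv_smul_smul₀ (halg r hr)]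
      rw [hw']
      exact Submodule.smul_mem _ _ h3
  -- E ⧸ F₀ is torsion-free
  have hq0 : NoZeroSMulDivisors R (E ⧸ F₀) := by
    refine ⟨fun {r x} h => ?_⟩
    by_cases hr : r = 0
    · exact Or.inl hr
    · refine Or.inr ?_
      obtain ⟨e, rfl⟩ := Submodule.Quotient.mk_surjective F₀ x
      rw [← Submodule.Quotient.mk_smul, Submodule.Quotient.mk_eq_zero] at h
      have h1 : algebraMap R K r • ((1 : K) ⊗ₜ[R] e) ∈ W := by
        rw [algebraMap_smul, ← tmul_smul]
        exact (hmem _).mp h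
      have h2 : (1 : K) ⊗ₜ[R] e ∈ W := by
        have := W.smul_mem (algebraMap R K r)⁻¹ h1
        rwa [inv_smul_smul₀ (halg r hr)] at this
      rw [Submodule.Quotient.mk_eq_zero]
      exact (hmem e).mpr h2
  -- uniqueness
  have huniq : ∀ F : Submodule R E,
      Submodule.span K (⇑(TensorProduct.mk R K E 1) '' (F : Set E)) = W →
      NoZeroSMulDivisors R (E ⧸ F) → F = F₀ := by
    intro F hs hnz
    apply le_antisymm
    · intro x hx
      refine (hmem x).mpr ?_
      rw [← hs]
      exact Submodule.subset_span ⟨x, hx, rfl⟩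
    · intro e he
      have h1 : (1 : K) ⊗ₜ[R] e ∈
          Submodule.span K (⇑(TensorProduct.mk R K E 1) '' (F : Set E)) := by
        rw [hs]; exact (hmem e).mp he
      obtain ⟨r, hr, x, hx, heq⟩ := aux_span_denom F _ h1
      have h2 : r • e = x := by
        apply aux_mk_one_injective (R := R) (K := K) (E := E)
        show (1 : K) ⊗ₜ[R] (r • e) = (1 : K) ⊗ₜ[R] x
        rw [tmul_smul, heq]
      exact aux_sat hnz hr (h2 ▸ hx)
  -- reflexivity
  have hrefl : ∀ F : Submodule R E,
      Submodule.span K (⇑(TensorProduct.mk R K E 1) '' (F : Set E)) = W →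
      NoZeroSMulDivisors R (E ⧸ F) → Module.IsReflexive R F := by
    intro F hs hnz
    have hinj : Function.Injective (Module.Dual.eval R F) := by
      intro x y hxy
      have hall : ∀ φ : Module.Dual R F, φ x = φ y := fun φ =>
        LinearMap.congr_fun hxy φ
      have hxyE : (x : E) = (y : E) := by
        by_contra hne
        have hsub : (x : E) - (y : E) ≠ 0 := sub_ne_zero.mpr hne
        let b := Module.Free.chooseBasis R E
        have : ∃ i, b.coord i ((x : E) - (y : E)) ≠ 0 := by
          by_contra hc
          push_neg at hc
          exact hsub (b.forall_coord_eq_zero_iff.mp hc)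
        obtain ⟨i, hi⟩ := this
        have := hall ((b.coord i).comp F.subtype)
        simp only [LinearMap.comp_apply, Submodule.coe_subtype] at this
        rw [map_sub] at hi
        exact hi (by rw [this, sub_self])
      exact Subtype.ext hxyE
    have hsurj : Function.Surjective (Module.Dual.eval R F) := by
      intro Φ
      set e : E := (Module.evalEquiv R E).symm (Φ.comp F.subtype.dualMap) with he
      have hkey : ∀ ψ : Module.Dual R E, ψ e = Φ (ψ.comp F.subtype) := by
        intro ψ
        rw [he, Module.apply_evalEquiv_symm_apply]
        rfl
      -- e lands in the span of F
      have heV : (1 : K) ⊗ₜ[R] e ∈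
          Submodule.span K (⇑(TensorProduct.mk R K E 1) '' (F : Set E)) := by
        by_contra hnotin
        obtain ⟨Ψ, hΨ0, hΨne⟩ := aux_separate _ _ hnotin
        obtain ⟨r, hr, ψ, hψ⟩ := aux_integral_rep (R := R) (K := K) (E := E) Ψ
        have hψF : ψ.comp F.subtype = 0 := by
          ext x
          have h0 : Ψ ((1 : K) ⊗ₜ[R] (x : E)) = 0 :=
            hΨ0 _ (Submodule.subset_span ⟨(x : E), x.2, rfl⟩)
          have h1 := hψ (x : E)
          rw [h0, smul_zero] at h1
          simpa using hKinj (by rw [h1, map_zero])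
        have h1 : ψ e = 0 := by rw [hkey ψ, hψF]; simp
        have h2 := hψ e
        rw [h1, map_zero, eq_comm, Algebra.smul_def, mul_eq_zero] at h2
        rcases h2 with h2 | h2
        · exact halg r hr h2
        · exact hΨne h2
      obtain ⟨r, hr, x, hx, heq⟩ := aux_span_denom F _ heV
      have h2 : r • e = x := by
        apply aux_mk_one_injective (R := R) (K := K) (E := E)
        show (1 : K) ⊗ₜ[R] (r • e) = (1 : K) ⊗ₜ[R] x
        rw [tmul_smul, heq]
      have heF : e ∈ F := aux_sat hnz hr (h2 ▸ hx)
      refine ⟨⟨e, heF⟩, ?_⟩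
      ext φ
      obtain ⟨r', hr', ψ, hψ⟩ := aux_dual_extend (K := K) F φ
      have hcomp : ψ.comp F.subtype = r' • φ := by
        ext x
        simp only [LinearMap.comp_apply, Submodule.coe_subtype, LinearMap.smul_apply,
          smul_eq_mul]
        exact hψ x
      have h3 : ψ e = Φ (ψ.comp F.subtype) := hkey ψ
      rw [hcomp, map_smul, smul_eq_mul] at h3
      have h4 := hψ (⟨e, heF⟩ : F)
      have h5 : ψ (((⟨e, heF⟩ : F) : E)) = ψ e := rfl
      rw [h5] at h4
      have h6 : r' * φ ⟨e, heF⟩ = r' * Φ φ := by rw [← h4, h3]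
      have := mul_left_cancel₀ hr' h6
      simpa [Module.Dual.eval_apply] using this
    exact ⟨⟨hinj, hsurj⟩⟩
  exact ⟨⟨F₀, ⟨hspan0, hq0⟩, fun F hF => huniq F hF.1 hF.2⟩, hrefl⟩
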